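/- (Planning optimality) In a finite deterministic MDP with a single goal state s_g and a set Π of deterministic policies satisfying the coverage assumption (some sequence of policies in Π reaches s_g from start state s_0), the FR-planning dynamic-programming iteration Γ_{k+1}(s) = max_{π∈Π, s'∈S} F^π(s,s')Γ_k(s'), initialized with Γ_1(s) = max_{π∈Π} F^π(s,s_g), converges to Γ(s_0) = γ^{L*} where L* is the length of the shortest path from s_0 to s_g achievable by switching among policies in Π. -/
import Mathlib


open scoped Classical

/-- Planning optimality: In a finite deterministic MDP with a
single goal state and deterministic base policies satisfying the coverage
assumption, FR-planning converges to Γ(s₀) = γ^{L*}, where L* is the shortest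
path length from s₀ to the goal achievable by switching among policies in Π. -/
theorem frp_optimality_deterministic {S A : Type*} [Fintype S] [Fintype A]
    (γ : ℝ) (hγ0 : 0 < γ) (hγ1 : γ < 1)
    (ρ : S → A → S) (Pol : Finset (S → A)) (hPol : Pol.Nonempty)
    (s₀ sg : S)
    (Fv : (S → A) → S → S → ℝ)
    (hFv : ∀ π s s', Fv π s s' =
      if h : ∃ k : ℕ, (fun x => ρ x (π x))^[k] s = s' then γ ^ Nat.find h else 0)
    (Reach : ℕ → Prop)
    (hReach : ∀ L, Reach L ↔ ∃ seq : ℕ → S, seq 0 = s₀ ∧ seq L = sg ∧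
      ∀ i < L, ∃ π ∈ Pol, ρ (seq i) (π (seq i)) = seq (i + 1))
    (hcov : ∃ L, Reach L)
    (Γ : ℕ → S → ℝ)
    (hΓ1 : ∀ s, Γ 1 s = Pol.sup' hPol fun π => Fv π s sg)
    (hΓ : ∀ k, 1 ≤ k → ∀ s, Γ (k + 1) s =
      (Pol ×ˢ (Finset.univ : Finset S)).sup'
        (hPol.product ⟨s₀, Finset.mem_univ s₀⟩)
        fun p => Fv p.1 s p.2 * Γ k p.2) :
    ∃ K : ℕ, ∀ k, K ≤ k → Γ k s₀ = γ ^ Nat.find hcov := by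
  classical
  -- generalized reachability
  set reach : S → ℕ → Prop := fun s L => ∃ seq : ℕ → S, seq 0 = s ∧ seq L = sg ∧
      ∀ i < L, ∃ π ∈ Pol, ρ (seq i) (π (seq i)) = seq (i + 1) with hreachdef
  have reach_sg : reach sg 0 := ⟨fun _ => sg, rfl, rfl, fun i hi => absurd hi (Nat.not_lt_zero i)⟩
  have reach_prepend : ∀ π ∈ Pol, ∀ s m, reach (ρ s (π s)) m → reach s (m + 1) := by
    intro π hπ s m ⟨seq, h0, hL, hstep⟩
    refine ⟨fun i => if i = 0 then s else seq (i - 1), by simp, by simp [hL], ?_⟩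
    intro i hi
    cases i with
    | zero => exact ⟨π, hπ, by simp [h0]⟩
    | succ j =>
      obtain ⟨π', hπ', hρ'⟩ := hstep j (by omega)
      exact ⟨π', hπ', by simpa using hρ'⟩
  have reach_tail : ∀ s m, reach s (m + 1) → ∃ π ∈ Pol, reach (ρ s (π s)) m := by
    intro s m ⟨seq, h0, hL, hstep⟩
    obtain ⟨π, hπ, hρ⟩ := hstep 0 (Nat.succ_pos m)
    refine ⟨π, hπ, fun i => seq (i + 1), ?_, hL, ?_⟩
    · rw [h0] at hρ; exact hρ.symm
    · intro i hi; exact hstep (i + 1) (by omega)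
  have reach_iter : ∀ π ∈ Pol, ∀ n s s', (fun x => ρ x (π x))^[n] s = s' →
      ∀ m, reach s' m → reach s (n + m) := by
    intro π hπ n
    induction n with
    | zero => intro s s' h m hm; simpa [← h] using hm
    | succ j ih =>
      intro s s' h m hm
      have h' : (fun x => ρ x (π x))^[j] (ρ s (π s)) = s' := by
        rw [← h, Function.iterate_succ_apply]
      have := reach_prepend π hπ s (j + m) (ih (ρ s (π s)) s' h' m hm)
      convert this using 1
      omega
  have hFv_nonneg : ∀ π s s', 0 ≤ Fv π s s' := by
    intro π s s'; rw [hFv]; split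
    · positivity
    · exact le_refl 0
  -- upper bound function
  set R : S → Prop := fun s => ∃ L, reach s L with hRdef
  set B : S → ℝ := fun s => if h : R s then γ ^ Nat.find h else 0 with hBdef
  have hB_nonneg : ∀ s, 0 ≤ B s := by
    intro s; simp only [hBdef]; split
    · positivity
    · exact le_refl 0
  have upper : ∀ k, 1 ≤ k → ∀ s, Γ k s ≤ B s := by
    intro k hk
    induction k, hk using Nat.le_induction with
    | base =>
      intro s
      rw [hΓ1 s]
      apply Finset.sup'_le
      intro π hπ
      rw [hFv]
      split
      · rename_i h
        have hr : reach s (Nat.find h + 0) := reach_iter π hπ _ s sg (Nat.find_spec h) 0 reach_sg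
        have hRs : R s := ⟨_, hr⟩
        rw [hBdef]
        simp only [dif_pos hRs]
        exact pow_le_pow_of_le_one hγ0.le hγ1.le (Nat.find_min' hRs hr)
      · exact hB_nonneg s
    | succ k hk ih =>
      intro s
      rw [hΓ k hk s]
      apply Finset.sup'_le
      rintro ⟨π, s'⟩ hp
      have hπ : π ∈ Pol := (Finset.mem_product.mp hp).1
      simp only
      rw [hFv]
      split
      · rename_i h
        by_cases hR' : R s'
        · have hB' : B s' = γ ^ Nat.find hR' := by simp [hBdef, dif_pos hR']
          have h1 : Γ k s' ≤ γ ^ Nat.find hR' := hB' ▸ ih s'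
          have hr : reach s (Nat.find h + Nat.find hR') :=
            reach_iter π hπ _ s s' (Nat.find_spec h) _ (Nat.find_spec hR')
          have hRs : R s := ⟨_, hr⟩
          calc γ ^ Nat.find h * Γ k s' ≤ γ ^ Nat.find h * γ ^ Nat.find hR' :=
                mul_le_mul_of_nonneg_left h1 (by positivity)
            _ = γ ^ (Nat.find h + Nat.find hR') := by rw [pow_add]
            _ ≤ γ ^ Nat.find hRs :=
                pow_le_pow_of_le_one hγ0.le hγ1.le (Nat.find_min' hRs hr)
            _ = B s := by simp [hBdef, dif_pos hRs]
        · have hB' : B s' = 0 := by simp [hBdef, dif_neg hR']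
          have h1 : Γ k s' ≤ 0 := hB' ▸ ih s'
          calc γ ^ Nat.find ‹∃ k, (fun x => ρ x (π x))^[k] s = s'› * Γ k s'
              ≤ γ ^ _ * 0 := mul_le_mul_of_nonneg_left h1 (by positivity)
            _ = 0 := mul_zero _
            _ ≤ B s := hB_nonneg s
      · rw [zero_mul]; exact hB_nonneg s
  -- Fv at the diagonal goal is 1
  have hFv_diag : ∀ π, Fv π sg sg = 1 := by
    intro π
    rw [hFv]
    have hex : ∃ k : ℕ, (fun x => ρ x (π x))^[k] sg = sg := ⟨0, rfl⟩
    rw [dif_pos hex, Nat.find_eq_zero hex |>.mpr rfl, pow_zero]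
  obtain ⟨π₀, hπ₀⟩ := hPol
  have hsg : ∀ k, 1 ≤ k → (1 : ℝ) ≤ Γ k sg := by
    intro k hk
    induction k, hk using Nat.le_induction with
    | base =>
      rw [hΓ1 sg]
      calc (1 : ℝ) = Fv π₀ sg sg := (hFv_diag π₀).symm
        _ ≤ _ := Finset.le_sup' (fun π => Fv π sg sg) hπ₀
    | succ k hk ih =>
      rw [hΓ k hk sg]
      have hmem : (π₀, sg) ∈ Pol ×ˢ (Finset.univ : Finset S) :=
        Finset.mem_product.mpr ⟨hπ₀, Finset.mem_univ sg⟩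
      calc (1 : ℝ) = Fv π₀ sg sg * 1 := by rw [hFv_diag, one_mul]
        _ ≤ Fv π₀ sg sg * Γ k sg := by
            rw [hFv_diag]; simpa using ih
        _ ≤ _ := Finset.le_sup' (fun p => Fv p.1 sg p.2 * Γ k p.2) hmem
  -- lower bound
  have lower : ∀ m, ∀ s, reach s m → ∀ k, m + 1 ≤ k → γ ^ m ≤ Γ k s := by
    intro m
    induction m with
    | zero =>
      intro s hs k hk
      obtain ⟨seq, h0, hL, _⟩ := hs
      have : s = sg := h0 ▸ hL
      rw [this, pow_zero]
      exact hsg k hk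
    | succ m ih =>
      intro s hs k hk
      obtain ⟨π, hπ, hs'⟩ := reach_tail s m hs
      obtain ⟨j, rfl⟩ : ∃ j, k = j + 1 := ⟨k - 1, by omega⟩
      have hj : 1 ≤ j := by omega
      rw [hΓ j hj s]
      have hmem : (π, ρ s (π s)) ∈ Pol ×ˢ (Finset.univ : Finset S) :=
        Finset.mem_product.mpr ⟨hπ, Finset.mem_univ _⟩
      have hFvge : γ ≤ Fv π s (ρ s (π s)) := by
        rw [hFv]
        have hex : ∃ n : ℕ, (fun x => ρ x (π x))^[n] s = ρ s (π s) :=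
          ⟨1, by simp⟩
        rw [dif_pos hex]
        calc γ = γ ^ 1 := (pow_one γ).symm
          _ ≤ γ ^ Nat.find hex :=
            pow_le_pow_of_le_one hγ0.le hγ1.le (Nat.find_min' hex (by simp))
      have hΓge : γ ^ m ≤ Γ j (ρ s (π s)) := ih (ρ s (π s)) hs' j (by omega)
      calc γ ^ (m + 1) = γ * γ ^ m := by ring
        _ ≤ Fv π s (ρ s (π s)) * Γ j (ρ s (π s)) :=
            mul_le_mul hFvge hΓge (by positivity) ((hFv_nonneg _ _ _))
        _ ≤ _ := Finset.le_sup' (fun p => Fv p.1 s p.2 * Γ j p.2) hmem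
  -- assembly
  have hreachL : reach s₀ (Nat.find hcov) := (hReach _).mp (Nat.find_spec hcov)
  refine ⟨Nat.find hcov + 1, fun k hk => ?_⟩
  have hRs₀ : R s₀ := ⟨_, hreachL⟩
  have hdeq : Nat.find hRs₀ = Nat.find hcov := by
    apply le_antisymm (Nat.find_min' hRs₀ hreachL)
    exact Nat.find_min' hcov ((hReach _).mpr (Nat.find_spec hRs₀))
  apply le_antisymm
  · have h2 : B s₀ = γ ^ Nat.find hcov := by
      simp only [hBdef, dif_pos hRs₀, hdeq]
    exact h2 ▸ upper k (by omega) s₀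
  · exact lower (Nat.find hcov) s₀ hreachL k hk
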